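/- Let G be a semi-Markovian causal graph with observed variables V, let 𝔸 = {A₀, …, A_m} be a finite collection of subsets of V, and let S ⊆ V. Let G′ be a semi-Markovian subgraph of G whose observed vertex set V′ satisfies S ⊆ V′ ⊆ V, whose unobserved vertices are unobserved vertices of G with both of their G′-children present, and all of whose edges are edges of G; set 𝔸′ = {A_i ∩ V′ : i ∈ [0:m]}. If Q[S] is not g-identifiable from (𝔸′, G′), then Q[S] is not g-identifiable from (𝔸, G). -/

import Mathlib

open scoped Classical

/-- A semi-Markovian causal graph: a DAG over a finite vertex set partitioned into
observed (`obs`) and unobserved (`unobs`) variables, where every unobserved variable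
has no parents and exactly two (distinct, observed) children. -/
structure CausalGraph (ν : Type) [Fintype ν] [DecidableEq ν] where
  obs : Finset ν
  unobs : Finset ν
  disj : Disjoint obs unobs
  E : ν → ν → Prop
  edge_mem : ∀ x y, E x y → x ∈ obs ∪ unobs ∧ y ∈ obs ∪ unobs
  acyclic : ∀ x, ¬ Relation.TransGen E x x
  unobs_no_parent : ∀ u ∈ unobs, ∀ w, ¬ E w u
  unobs_two_children : ∀ u ∈ unobs,
    ∃ a b, a ≠ b ∧ a ∈ obs ∧ b ∈ obs ∧ (∀ w, E u w ↔ w = a ∨ w = b)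

namespace CausalGraph

variable {ν : Type} [Fintype ν] [DecidableEq ν]

def verts (G : CausalGraph ν) : Finset ν := G.obs ∪ G.unobs

/-- A structural equation model over the causal graph `G`: finite nonempty domains
(encoded as finite sets of naturals), a pmf for each unobserved variable, and a
conditional pmf (given an assignment to the parents) for each observed variable. -/
structure SEM (G : CausalGraph ν) where
  dom : ν → Finset ℕ
  dom_ne : ∀ x, (dom x).Nonempty
  pU : ν → ℕ → ℝ
  pU_nonneg : ∀ u n, 0 ≤ pU u n
  pU_sum : ∀ u ∈ G.unobs, ∑ n ∈ dom u, pU u n = 1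
  pO : ν → ℕ → (ν → ℕ) → ℝ
  pO_nonneg : ∀ x n pa, 0 ≤ pO x n pa
  pO_sum : ∀ x ∈ G.obs, ∀ pa : ν → ℕ, ∑ n ∈ dom x, pO x n pa = 1
  pO_par : ∀ x n (pa pa' : ν → ℕ), (∀ p, G.E p x → pa p = pa' p) → pO x n pa = pO x n pa'

namespace SEM

variable {G : CausalGraph ν}

/-- Full assignments: all variables of `G` get values in their domains
(non-vertices are pinned to `0`). -/
noncomputable def fullAssign (M : SEM G) : Finset (ν → ℕ) :=
  Fintype.piFinset (fun x => if x ∈ G.verts then M.dom x else {0})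

/-- Observed assignments `dom(V)`: observed variables get values in their domains
(all other coordinates are pinned to `0`). -/
noncomputable def obsAssign (M : SEM G) : Finset (ν → ℕ) :=
  Fintype.piFinset (fun x => if x ∈ G.obs then M.dom x else {0})

/-- `Q^M[S](v) = Σ_u Π_{X ∈ S} P(x | pa_G(X)) Π_{U} P(u)`. -/
noncomputable def Q (M : SEM G) (S : Finset ν) (v : ν → ℕ) : ℝ :=
  ∑ w ∈ M.fullAssign.filter (fun w => ∀ x ∈ G.obs, w x = v x),
    (∏ x ∈ S, M.pO x (w x) w) * ∏ u ∈ G.unobs, M.pU u (w u)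

/-- The observational distribution `P^M(v) = Q^M[V](v)`. -/
noncomputable def P (M : SEM G) (v : ν → ℕ) : ℝ := M.Q G.obs v

/-- Post-interventional probability `P^M_x(y)`: sum of `Q^M[V∖X]` over all observed
realizations consistent with `x` on `X` and `y` on `Y`. -/
noncomputable def Px (M : SEM G) (X : Finset ν) (x : ν → ℕ) (Y : Finset ν) (y : ν → ℕ) : ℝ :=
  ∑ v ∈ M.obsAssign.filter (fun v => (∀ i ∈ X, v i = x i) ∧ (∀ i ∈ Y, v i = y i)),
    M.Q (G.obs \ X) v

/-- `M ∈ 𝕄⁺(G)`: strictly positive observational distribution. -/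
def positive (M : SEM G) : Prop := ∀ v ∈ M.obsAssign, 0 < M.P v

end SEM

/-- The causal effect of `X` on `Y` is identifiable from `G`. -/
def Identifiable (G : CausalGraph ν) (X Y : Finset ν) : Prop :=
  ∀ M₁ M₂ : SEM G, M₁.positive → M₂.positive →
    (∀ i ∈ G.obs, M₁.dom i = M₂.dom i) →
    (∀ v ∈ M₁.obsAssign, M₁.P v = M₂.P v) →
    ∀ x y : ν → ℕ, (∀ i ∈ X, x i ∈ M₁.dom i) → (∀ i ∈ Y, y i ∈ M₁.dom i) →
      M₁.Px X x Y y = M₂.Px X x Y y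

/-- `Q[S]` is identifiable from `G`. -/
def QIdentifiable (G : CausalGraph ν) (S : Finset ν) : Prop :=
  Identifiable G (G.obs \ S) S

/-- The causal effect of `X` on `Y` is g-identifiable from `(𝔸, G)`. -/
def GIdentifiable (G : CausalGraph ν) (𝔸 : Finset (Finset ν)) (X Y : Finset ν) : Prop :=
  ∀ M₁ M₂ : SEM G, M₁.positive → M₂.positive →
    (∀ i ∈ G.obs, M₁.dom i = M₂.dom i) →
    (∀ A ∈ 𝔸, ∀ v ∈ M₁.obsAssign, M₁.Q A v = M₂.Q A v) →
    ∀ x y : ν → ℕ, (∀ i ∈ X, x i ∈ M₁.dom i) → (∀ i ∈ Y, y i ∈ M₁.dom i) →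
      M₁.Px X x Y y = M₂.Px X x Y y

/-- `Q[S]` is g-identifiable from `(𝔸, G)`. -/
def QGIdentifiable (G : CausalGraph ν) (𝔸 : Finset (Finset ν)) (S : Finset ν) : Prop :=
  GIdentifiable G 𝔸 (G.obs \ S) S

/-- Bidirected edge of `G_X` between `a` and `b`: distinct members of `X` sharing an
unobserved parent (whose two children then necessarily both lie in `X`). -/
def biEdge (G : CausalGraph ν) (X : Finset ν) (a b : ν) : Prop :=
  a ≠ b ∧ a ∈ X ∧ b ∈ X ∧ ∃ u ∈ G.unobs, G.E u a ∧ G.E u b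

/-- `X` is a single c-component of `G`. -/
def SingleC (G : CausalGraph ν) (X : Finset ν) : Prop :=
  X.Nonempty ∧ ∀ a ∈ X, ∀ b ∈ X, Relation.ReflTransGen (G.biEdge X) a b

/-- The c-components of `S`: connected components of the bidirected part of `G_S`. -/
noncomputable def cComponents (G : CausalGraph ν) (S : Finset ν) : Finset (Finset ν) :=
  S.image (fun a => S.filter (fun b => Relation.ReflTransGen (G.biEdge S) a b))

/-- Directed edge of `G_X` (both endpoints in `X`). -/
def dirEdgeIn (G : CausalGraph ν) (X : Finset ν) (a b : ν) : Prop :=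
  a ∈ X ∧ b ∈ X ∧ G.E a b

/-- `Anc_Y(G_X)`: members of `X` having a directed path in `G_X` to some member of `Y`. -/
noncomputable def ancIn (G : CausalGraph ν) (X Y : Finset ν) : Finset ν :=
  X.filter (fun a => ∃ y ∈ Y, Relation.ReflTransGen (G.dirEdgeIn X) a y)

/-- Unobserved vertices of the induced subgraph `G[A]`: unobserved vertices of `G`
both of whose children lie in `A`. -/
noncomputable def inducedUnobs (G : CausalGraph ν) (A : Finset ν) : Finset ν :=
  G.unobs.filter (fun u => ∀ w, G.E u w → w ∈ A)

/-- The induced subgraph `G[A]`. -/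
noncomputable def induced (G : CausalGraph ν) (A : Finset ν) : CausalGraph ν where
  obs := A ∩ G.obs
  unobs := G.inducedUnobs A
  disj := G.disj.mono Finset.inter_subset_right (Finset.filter_subset _ _)
  E x y := G.E x y ∧ x ∈ (A ∩ G.obs) ∪ G.inducedUnobs A ∧ y ∈ (A ∩ G.obs) ∪ G.inducedUnobs A
  edge_mem := fun x y h => ⟨h.2.1, h.2.2⟩
  acyclic := fun x h => G.acyclic x (Relation.TransGen.mono (fun a b (hab : _ ∧ _) => hab.1) x x h)
  unobs_no_parent := fun u hu w hw =>
    G.unobs_no_parent u (Finset.mem_filter.mp hu).1 w hw.1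
  unobs_two_children := by
    intro u hu
    have hu' := Finset.mem_filter.mp hu
    obtain ⟨a, b, hab, ha, hb, hiff⟩ := G.unobs_two_children u hu'.1
    have hEa : G.E u a := (hiff a).mpr (Or.inl rfl)
    have hEb : G.E u b := (hiff b).mpr (Or.inr rfl)
    have haA : a ∈ A := hu'.2 a hEa
    have hbA : b ∈ A := hu'.2 b hEb
    refine ⟨a, b, hab, Finset.mem_inter.mpr ⟨haA, ha⟩, Finset.mem_inter.mpr ⟨hbA, hb⟩, ?_⟩
    intro w
    constructor
    · intro hw; exact (hiff w).mp hw.1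
    · rintro (rfl | rfl)
      · exact ⟨hEa, Finset.mem_union.mpr (Or.inr hu),
          Finset.mem_union.mpr (Or.inl (Finset.mem_inter.mpr ⟨haA, ha⟩))⟩
      · exact ⟨hEb, Finset.mem_union.mpr (Or.inr hu),
          Finset.mem_union.mpr (Or.inl (Finset.mem_inter.mpr ⟨hbA, hb⟩))⟩

/-- `H` is a subgraph of `G`. -/
def IsSubgraph (H G : CausalGraph ν) : Prop :=
  H.obs ⊆ G.obs ∧ H.unobs ⊆ G.unobs ∧ ∀ a b, H.E a b → G.E a b

/-- `H` is an `R`-rooted c-forest: `R` is the root set of `H`, the observed vertex set of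
`H` is a single c-component, and every observed vertex has at most one child in `H`. -/
def IsCForest (H : CausalGraph ν) (R : Finset ν) : Prop :=
  H.obs.filter (fun x => ∀ w, ¬ H.E x w) = R ∧
  H.SingleC H.obs ∧
  ∀ x ∈ H.obs, ∀ w w', H.E x w → H.E x w' → w = w'

end CausalGraph

section Aux

open CausalGraph

variable {ν : Type} [Fintype ν] [DecidableEq ν] {G G' : CausalGraph ν}

lemma not_verts_of_obs (hsub : IsSubgraph G' G)
    {x : ν} (hx : x ∈ G.obs) (hx' : x ∉ G'.obs) : x ∉ G'.verts := by
  intro h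
  rcases Finset.mem_union.mp h with h | h
  · exact hx' h
  · exact (Finset.disjoint_left.mp G.disj hx) (hsub.2.1 h)

lemma not_verts_of_unobs (hsub : IsSubgraph G' G)
    {u : ν} (hu : u ∈ G.unobs) (hu' : u ∉ G'.unobs) : u ∉ G'.verts := by
  intro h
  rcases Finset.mem_union.mp h with h | h
  · exact (Finset.disjoint_left.mp G.disj (hsub.1 h)) hu
  · exact hu' h

noncomputable def extDom (M' : CausalGraph.SEM G') : ν → Finset ℕ :=
  fun x => if x ∈ G'.verts then M'.dom x else {0}

noncomputable def extPU (M' : CausalGraph.SEM G') : ν → ℕ → ℝ :=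
  fun u n => if u ∈ G'.unobs then M'.pU u n else if n = 0 then 1 else 0

noncomputable def extPO (M' : CausalGraph.SEM G') : ν → ℕ → (ν → ℕ) → ℝ :=
  fun x n pa => if x ∈ G'.obs then M'.pO x n pa else if n = 0 then 1 else 0

noncomputable def extSEM (hsub : IsSubgraph G' G) (M' : CausalGraph.SEM G') :
    CausalGraph.SEM G where
  dom := extDom M'
  dom_ne x := by
    unfold extDom
    split
    · exact M'.dom_ne x
    · exact ⟨0, Finset.mem_singleton_self 0⟩
  pU := extPU M'
  pU_nonneg u n := by
    unfold extPU
    split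
    · exact M'.pU_nonneg u n
    · split <;> norm_num
  pU_sum u hu := by
    unfold extDom extPU
    by_cases h : u ∈ G'.unobs
    · have hv : u ∈ G'.verts := Finset.mem_union_right _ h
      simp only [if_pos hv, if_pos h]
      exact M'.pU_sum u h
    · have hv : u ∉ G'.verts := not_verts_of_unobs hsub hu h
      simp [if_neg hv, if_neg h]
  pO := extPO M'
  pO_nonneg x n pa := by
    unfold extPO
    split
    · exact M'.pO_nonneg x n pa
    · split <;> norm_num
  pO_sum x hx pa := by
    unfold extDom extPO
    by_cases h : x ∈ G'.obs
    · have hv : x ∈ G'.verts := Finset.mem_union_left _ h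
      simp only [if_pos hv, if_pos h]
      exact M'.pO_sum x h pa
    · have hv : x ∉ G'.verts := not_verts_of_obs hsub hx h
      simp [if_neg hv, if_neg h]
  pO_par x n pa pa' hagree := by
    unfold extPO
    by_cases h : x ∈ G'.obs
    · simp only [if_pos h]
      exact M'.pO_par x n pa pa' (fun p hp => hagree p (hsub.2.2 p x hp))
    · simp [if_neg h]

lemma extSEM_dom (hsub : IsSubgraph G' G) (M' : CausalGraph.SEM G') :
    (extSEM hsub M').dom = extDom M' := rfl

lemma extSEM_pU (hsub : IsSubgraph G' G) (M' : CausalGraph.SEM G') :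
    (extSEM hsub M').pU = extPU M' := rfl

lemma extSEM_pO (hsub : IsSubgraph G' G) (M' : CausalGraph.SEM G') :
    (extSEM hsub M').pO = extPO M' := rfl

lemma extSEM_fullAssign (hsub : IsSubgraph G' G) (M' : CausalGraph.SEM G') :
    (extSEM hsub M').fullAssign = M'.fullAssign := by
  unfold CausalGraph.SEM.fullAssign
  congr 1
  funext x
  rw [extSEM_dom]
  unfold extDom
  by_cases h : x ∈ G'.verts
  · have hG : x ∈ G.verts := by
      rcases Finset.mem_union.mp h with h' | h'
      · exact Finset.mem_union_left _ (hsub.1 h')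
      · exact Finset.mem_union_right _ (hsub.2.1 h')
    simp [h, hG]
  · simp [h]

lemma extSEM_obsAssign (hsub : IsSubgraph G' G) (M' : CausalGraph.SEM G') :
    (extSEM hsub M').obsAssign = M'.obsAssign := by
  unfold CausalGraph.SEM.obsAssign
  congr 1
  funext x
  rw [extSEM_dom]
  unfold extDom
  by_cases h : x ∈ G'.obs
  · have h1 : x ∈ G.obs := hsub.1 h
    have h2 : x ∈ G'.verts := Finset.mem_union_left _ h
    simp [h, h1, h2]
  · by_cases h1 : x ∈ G.obs
    · have h2 := not_verts_of_obs hsub h1 h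
      simp [h, h1, h2]
    · simp [h, h1]

lemma full_zero {M' : CausalGraph.SEM G'} {w : ν → ℕ}
    (hw : w ∈ M'.fullAssign) {x : ν} (hx : x ∉ G'.verts) : w x = 0 := by
  simp only [CausalGraph.SEM.fullAssign, Fintype.mem_piFinset] at hw
  have := hw x
  simpa [hx] using this

lemma obs_zero {M' : CausalGraph.SEM G'} {v : ν → ℕ}
    (hv : v ∈ M'.obsAssign) {x : ν} (hx : x ∉ G'.obs) : v x = 0 := by
  simp only [CausalGraph.SEM.obsAssign, Fintype.mem_piFinset] at hv
  have := hv x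
  simpa [hx] using this

lemma extSEM_Q (hsub : IsSubgraph G' G) (M' : CausalGraph.SEM G')
    {A : Finset ν} (hA : A ⊆ G.obs) {v : ν → ℕ}
    (hv : ∀ x, x ∉ G'.obs → v x = 0) :
    (extSEM hsub M').Q A v = M'.Q (A ∩ G'.obs) v := by
  unfold CausalGraph.SEM.Q
  rw [extSEM_fullAssign]
  have hfil : M'.fullAssign.filter (fun w => ∀ x ∈ G.obs, w x = v x)
      = M'.fullAssign.filter (fun w => ∀ x ∈ G'.obs, w x = v x) := by
    ext w
    simp only [Finset.mem_filter, and_congr_right_iff]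
    intro hw
    constructor
    · intro h x hx
      exact h x (hsub.1 hx)
    · intro h x hx
      by_cases h' : x ∈ G'.obs
      · exact h x h'
      · rw [full_zero hw (not_verts_of_obs hsub hx h'), hv x h']
  rw [hfil]
  apply Finset.sum_congr rfl
  intro w hw
  have hwfull : w ∈ M'.fullAssign := (Finset.mem_filter.mp hw).1
  congr 1
  · have h1 : ∏ x ∈ A, (extSEM hsub M').pO x (w x) w
        = ∏ x ∈ A ∩ G'.obs, (extSEM hsub M').pO x (w x) w := by
      refine (Finset.prod_subset Finset.inter_subset_left ?_).symm
      intro x hx hx'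
      have hno : x ∉ G'.obs := fun h => hx' (Finset.mem_inter.mpr ⟨hx, h⟩)
      have hz : w x = 0 := full_zero hwfull (not_verts_of_obs hsub (hA hx) hno)
      rw [extSEM_pO]
      unfold extPO
      simp [hno, hz]
    rw [h1]
    apply Finset.prod_congr rfl
    intro x hx
    have hxo : x ∈ G'.obs := (Finset.mem_inter.mp hx).2
    rw [extSEM_pO]
    unfold extPO
    simp [hxo]
  · have h2 : ∏ u ∈ G.unobs, (extSEM hsub M').pU u (w u)
        = ∏ u ∈ G'.unobs, (extSEM hsub M').pU u (w u) := by
      refine (Finset.prod_subset hsub.2.1 ?_).symm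
      intro u hu hu'
      have hz : w u = 0 := full_zero hwfull (not_verts_of_unobs hsub hu hu')
      rw [extSEM_pU]
      unfold extPU
      simp [hu', hz]
    rw [h2]
    apply Finset.prod_congr rfl
    intro u hu
    rw [extSEM_pU]
    unfold extPU
    simp [hu]

lemma extSEM_P (hsub : IsSubgraph G' G) (M' : CausalGraph.SEM G')
    {v : ν → ℕ} (hv : v ∈ M'.obsAssign) :
    (extSEM hsub M').P v = M'.P v := by
  unfold CausalGraph.SEM.P
  rw [extSEM_Q hsub M' (Finset.Subset.refl _) (fun x hx => obs_zero hv hx)]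
  congr 1
  exact Finset.inter_eq_right.mpr hsub.1

lemma extSEM_positive (hsub : IsSubgraph G' G) {M' : CausalGraph.SEM G'}
    (hp : M'.positive) : (extSEM hsub M').positive := by
  intro v hv
  rw [extSEM_obsAssign] at hv
  rw [extSEM_P hsub M' hv]
  exact hp v hv

lemma extSEM_Px (hsub : IsSubgraph G' G) (M' : CausalGraph.SEM G')
    {S : Finset ν} (hS : S ⊆ G'.obs) (x y : ν → ℕ) :
    (extSEM hsub M').Px (G.obs \ S) (fun i => if i ∈ G'.obs then x i else 0) S y
      = M'.Px (G'.obs \ S) x S y := by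
  unfold CausalGraph.SEM.Px
  rw [extSEM_obsAssign]
  have hSG : S ⊆ G.obs := hS.trans hsub.1
  have hd : G.obs \ (G.obs \ S) = S := by
    ext a
    simp only [Finset.mem_sdiff, not_and, not_not]
    constructor
    · rintro ⟨h1, h2⟩; exact h2 h1
    · intro h; exact ⟨hSG h, fun _ => h⟩
  have hd' : G'.obs \ (G'.obs \ S) = S := by
    ext a
    simp only [Finset.mem_sdiff, not_and, not_not]
    constructor
    · rintro ⟨h1, h2⟩; exact h2 h1
    · intro h; exact ⟨hS h, fun _ => h⟩
  rw [hd, hd']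
  have hfil : M'.obsAssign.filter
      (fun v => (∀ i ∈ G.obs \ S, v i = if i ∈ G'.obs then x i else 0)
        ∧ (∀ i ∈ S, v i = y i))
      = M'.obsAssign.filter
      (fun v => (∀ i ∈ G'.obs \ S, v i = x i) ∧ (∀ i ∈ S, v i = y i)) := by
    ext v
    simp only [Finset.mem_filter, and_congr_right_iff]
    intro hv
    constructor
    · rintro ⟨h1, h2⟩
      refine ⟨?_, h2⟩
      intro i hi
      have hi' : i ∈ G.obs \ S :=
        Finset.mem_sdiff.mpr ⟨hsub.1 (Finset.mem_sdiff.mp hi).1, (Finset.mem_sdiff.mp hi).2⟩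
      have := h1 i hi'
      rwa [if_pos (Finset.mem_sdiff.mp hi).1] at this
    · rintro ⟨h1, h2⟩
      refine ⟨?_, h2⟩
      intro i hi
      by_cases h : i ∈ G'.obs
      · rw [if_pos h]
        exact h1 i (Finset.mem_sdiff.mpr ⟨h, (Finset.mem_sdiff.mp hi).2⟩)
      · rw [if_neg h]
        exact obs_zero hv h
  rw [hfil]
  apply Finset.sum_congr rfl
  intro v hv
  have hv' : v ∈ M'.obsAssign := (Finset.mem_filter.mp hv).1
  rw [extSEM_Q hsub M' hSG (fun a ha => obs_zero hv' ha)]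
  congr 1
  exact Finset.inter_eq_left.mpr hS

end Aux

/-- Lemma 2. If `G'` is a semi-Markovian subgraph of `G` with
`S ⊆ V' ⊆ V` and `𝔸' = {A ∩ V' : A ∈ 𝔸}`, then non-g-identifiability of `Q[S]` from
`(𝔸', G')` implies non-g-identifiability of `Q[S]` from `(𝔸, G)`. -/
theorem not_gid_of_not_gid_subgraph
    {ν : Type} [Fintype ν] [DecidableEq ν] (G G' : CausalGraph ν)
    (𝔸 : Finset (Finset ν)) (h𝔸 : ∀ A ∈ 𝔸, A ⊆ G.obs)
    (S : Finset ν) (hS : S ⊆ G'.obs)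
    (hsub : CausalGraph.IsSubgraph G' G) :
    ¬ CausalGraph.QGIdentifiable G' (𝔸.image (fun A => A ∩ G'.obs)) S →
    ¬ G.QGIdentifiable 𝔸 S := by
  intro hnot hGid
  apply hnot
  unfold CausalGraph.QGIdentifiable CausalGraph.GIdentifiable at hGid ⊢
  intro M₁ M₂ hp₁ hp₂ hdom hQ x y hx hy
  have key := hGid (extSEM hsub M₁) (extSEM hsub M₂)
      (extSEM_positive hsub hp₁) (extSEM_positive hsub hp₂)
      ?_ ?_ (fun i => if i ∈ G'.obs then x i else 0) y ?_ ?_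
  · rw [extSEM_Px hsub M₁ hS x y, extSEM_Px hsub M₂ hS x y] at key
    exact key
  · -- domains agree
    intro i hi
    show extDom M₁ i = extDom M₂ i
    unfold extDom
    by_cases h : i ∈ G'.verts
    · have hio : i ∈ G'.obs := by
        rcases Finset.mem_union.mp h with h' | h'
        · exact h'
        · exact absurd hi (Finset.disjoint_right.mp G.disj (hsub.2.1 h'))
      simp [h, hdom i hio]
    · simp [h]
  · -- Q agreement
    intro A hA v hv
    rw [extSEM_obsAssign] at hv
    have hz : ∀ a, a ∉ G'.obs → v a = 0 := fun a ha => obs_zero hv ha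
    rw [extSEM_Q hsub M₁ (h𝔸 A hA) hz, extSEM_Q hsub M₂ (h𝔸 A hA) hz]
    exact hQ (A ∩ G'.obs) (Finset.mem_image_of_mem _ hA) v hv
  · -- x in domains
    intro i hi
    show (if i ∈ G'.obs then x i else 0) ∈ extDom M₁ i
    unfold extDom
    by_cases h : i ∈ G'.obs
    · have hv : i ∈ G'.verts := Finset.mem_union_left _ h
      have hi' : i ∈ G'.obs \ S :=
        Finset.mem_sdiff.mpr ⟨h, (Finset.mem_sdiff.mp hi).2⟩
      simp only [if_pos h, if_pos hv]
      exact hx i hi'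
    · have hnv : i ∉ G'.verts := not_verts_of_obs hsub (Finset.mem_sdiff.mp hi).1 h
      simp [h, hnv]
  · -- y in domains
    intro i hi
    show y i ∈ extDom M₁ i
    have hv : i ∈ G'.verts := Finset.mem_union_left _ (hS hi)
    unfold extDom
    simp only [if_pos hv]
    exact hy i hi
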